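/- Let k be a positive even natural number and let D : (ZMod k → ZMod 2) → (ZMod k → ZMod 2) be the ℤ/2-linear map given by (D x)(j) = x(j-1) + x(j+1) when j is even and (D x)(j) = 0 when j is odd (parity of j ∈ ZMod k meaning parity of its canonical representative, which is well defined since k is even). Let ∂ : (ZMod k → ZMod 2) × (ZMod k → ZMod 2) → (ZMod k → ZMod 2) × (ZMod k → ZMod 2) be the ℤ/2-linear map ∂(q, p) = (0, D p). Then the range of ∂ is contained in the kernel of ∂, and the quotient vector space ker(∂)/range(∂) has dimension k + 2 over ZMod 2. -/

import Mathlib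

/-- Parity of the canonical representative of a natural cast, when `k` is even. -/
lemma lfc_par (k : ℕ) [NeZero k] (hke : Even k) (n : ℕ) :
    Even ((n : ZMod k)).val ↔ Even n := by
  rw [ZMod.val_natCast]
  have h := Nat.div_add_mod n k
  have hk2 : Even (k * (n / k)) := hke.mul_right _
  conv_rhs => rw [← h]
  rw [Nat.even_add]
  simp [hk2]

lemma lfc_cast_val (k : ℕ) [NeZero k] (a : ZMod k) : ((a.val : ℕ) : ZMod k) = a :=
  ZMod.natCast_rightInverse a

lemma lfc_succ_par (k : ℕ) [NeZero k] (hke : Even k) (j : ZMod k) :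
    Even (j + 1).val ↔ ¬ Even j.val := by
  have h1 : j + 1 = ((j.val + 1 : ℕ) : ZMod k) := by
    rw [Nat.cast_add, Nat.cast_one, lfc_cast_val]
  rw [h1, lfc_par k hke, Nat.even_add_one]

lemma lfc_pred_par (k : ℕ) [NeZero k] (hke : Even k) (j : ZMod k) (hj : Even j.val) :
    ¬ Even (j - 1).val := by
  intro h
  have h2 := lfc_succ_par k hke (j - 1)
  rw [sub_add_cancel] at h2
  exact (h2.mp hj) h

/-- In `ZMod 2`, `a + b = 0` implies `a = b`. -/
lemma lfc_add_eq_zero {a b : ZMod 2} (h : a + b = 0) : a = b := by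
  have h2 : a - b = 0 := by rw [CharTwo.sub_eq_add]; exact h
  exact sub_eq_zero.mp h2

/-- Elements of the kernel of `D` are constant on odd indices. -/
lemma lfc_ker_const (k : ℕ) [NeZero k] (hke : Even k)
    (D : (ZMod k → ZMod 2) →ₗ[ZMod 2] (ZMod k → ZMod 2))
    (hD : ∀ x : ZMod k → ZMod 2, ∀ j : ZMod k,
      D x j = if Even j.val then x (j - 1) + x (j + 1) else 0)
    (x : ZMod k → ZMod 2) (hx : D x = 0) (j : ZMod k)
    (hj : ¬ Even j.val) : x j = x 1 := by
  have key : ∀ m : ℕ, x ((2 * m + 1 : ℕ) : ZMod k) = x 1 := by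
    intro m
    induction m with
    | zero => norm_num
    | succ m ih =>
      have hjev : Even (((2 * m + 2 : ℕ) : ZMod k)).val :=
        (lfc_par k hke _).mpr ⟨m + 1, by ring⟩
      have h0 : D x ((2 * m + 2 : ℕ) : ZMod k) = 0 := by rw [hx]; rfl
      rw [hD x _, if_pos hjev] at h0
      have hsub : ((2 * m + 2 : ℕ) : ZMod k) - 1 = ((2 * m + 1 : ℕ) : ZMod k) := by
        push_cast; ring
      have hadd : ((2 * m + 2 : ℕ) : ZMod k) + 1 = ((2 * (m + 1) + 1 : ℕ) : ZMod k) := by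
        push_cast; ring
      rw [hsub, hadd] at h0
      rw [← lfc_add_eq_zero h0, ih]
  rw [Nat.not_even_iff_odd] at hj
  obtain ⟨m, hm⟩ := hj
  have hj2 : j = ((2 * m + 1 : ℕ) : ZMod k) := by
    rw [← lfc_cast_val k j, hm]
  rw [hj2, key]

lemma lfc_mem_ker (k : ℕ) [NeZero k] (hke : Even k)
    (D : (ZMod k → ZMod 2) →ₗ[ZMod 2] (ZMod k → ZMod 2))
    (hD : ∀ x : ZMod k → ZMod 2, ∀ j : ZMod k,
      D x j = if Even j.val then x (j - 1) + x (j + 1) else 0)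
    (f : {j : ZMod k // Even j.val} → ZMod 2) (c : ZMod 2) :
    D (fun j => if h : Even j.val then f ⟨j, h⟩ else c) = 0 := by
  funext j
  rw [hD, Pi.zero_apply]
  by_cases hj : Even j.val
  · have h1 : ¬ Even (j - 1).val := lfc_pred_par k hke j hj
    have h2 : ¬ Even (j + 1).val := by rw [lfc_succ_par k hke]; exact fun h => h hj
    rw [if_pos hj, dif_neg h1, dif_neg h2]
    exact CharTwo.add_self_eq_zero c
  · rw [if_neg hj]

/-- The even residues in `ZMod k` number `k / 2` when `k` is even and positive. -/
lemma lfc_card_evens (k : ℕ) [NeZero k] (hke : Even k) :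
    Fintype.card {j : ZMod k // Even j.val} = k / 2 := by
  obtain ⟨m, hm⟩ := hke
  have hkpos : 0 < k := Nat.pos_of_ne_zero (NeZero.ne k)
  let g : Fin (k / 2) → {j : ZMod k // Even j.val} := fun i =>
    ⟨((2 * i.1 : ℕ) : ZMod k), (lfc_par k ⟨m, hm⟩ _).mpr ⟨i.1, by ring⟩⟩
  have hg : Function.Bijective g := by
    constructor
    · rintro ⟨i, hi⟩ ⟨i', hi'⟩ hii
      have h1 : ((2 * i : ℕ) : ZMod k) = ((2 * i' : ℕ) : ZMod k) :=
        congrArg Subtype.val hii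
      have e1 : ((2 * i : ℕ) : ZMod k).val = 2 * i := ZMod.val_cast_of_lt (by omega)
      have e2 : ((2 * i' : ℕ) : ZMod k).val = 2 * i' := ZMod.val_cast_of_lt (by omega)
      have h3 : (2 : ℕ) * i = 2 * i' := by rw [← e1, ← e2, h1]
      simp only [Fin.mk.injEq]
      omega
    · rintro ⟨j, hj⟩
      obtain ⟨a, ha⟩ := hj
      have hjlt := ZMod.val_lt j
      refine ⟨⟨j.val / 2, by omega⟩, ?_⟩
      simp only [g, Subtype.mk.injEq]
      have : 2 * (j.val / 2) = j.val := by omega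
      exact Subtype.ext (by show ((2 * (j.val / 2) : ℕ) : ZMod k) = j; rw [this, lfc_cast_val])
  rw [← Fintype.card_of_bijective hg, Fintype.card_fin]

lemma lfc_finrank_kerD (k : ℕ) [NeZero k] (hke : Even k)
    (D : (ZMod k → ZMod 2) →ₗ[ZMod 2] (ZMod k → ZMod 2))
    (hD : ∀ x : ZMod k → ZMod 2, ∀ j : ZMod k,
      D x j = if Even j.val then x (j - 1) + x (j + 1) else 0) :
    Module.finrank (ZMod 2) (LinearMap.ker D) = k / 2 + 1 := by
  classical
  let e : (LinearMap.ker D) ≃ₗ[ZMod 2]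
      ({j : ZMod k // Even j.val} → ZMod 2) × ZMod 2 :=
    { toFun := fun x => (fun s => x.1 s.1, x.1 1)
      map_add' := fun x y => rfl
      map_smul' := fun c x => rfl
      invFun := fun fc => ⟨fun j => if h : Even j.val then fc.1 ⟨j, h⟩ else fc.2,
        LinearMap.mem_ker.mpr (lfc_mem_ker k hke D hD fc.1 fc.2)⟩
      left_inv := by
        rintro ⟨x, hx⟩
        ext j
        simp only
        by_cases hj : Even j.val
        · rw [dif_pos hj]
        · rw [dif_neg hj]
          exact (lfc_ker_const k hke D hD x (LinearMap.mem_ker.mp hx) j hj).symm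
      right_inv := by
        rintro ⟨f, c⟩
        have h1 : ¬ Even ((1 : ZMod k)).val := by
          have hk1 : 1 < k := by
            obtain ⟨m, hm⟩ := hke
            have := Nat.pos_of_ne_zero (NeZero.ne k)
            omega
          rw [ZMod.val_one_eq_one_mod, Nat.mod_eq_of_lt hk1]
          exact Nat.not_even_iff_odd.mpr odd_one
        simp only [Prod.mk.injEq]
        constructor
        · funext s
          rw [dif_pos s.2]
        · rw [dif_neg h1] }
  rw [e.finrank_eq, Module.finrank_prod, Module.finrank_fintype_fun_eq_card,
    Module.finrank_self, lfc_card_evens k hke]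

lemma lfc_finrank_rangeD (k : ℕ) [NeZero k] (hke : Even k)
    (D : (ZMod k → ZMod 2) →ₗ[ZMod 2] (ZMod k → ZMod 2))
    (hD : ∀ x : ZMod k → ZMod 2, ∀ j : ZMod k,
      D x j = if Even j.val then x (j - 1) + x (j + 1) else 0) :
    Module.finrank (ZMod 2) (LinearMap.range D) = k / 2 - 1 := by
  have h := LinearMap.finrank_range_add_finrank_ker D
  rw [Module.finrank_fintype_fun_eq_card, ZMod.card, lfc_finrank_kerD k hke D hD] at h
  obtain ⟨m, hm⟩ := hke
  have := Nat.pos_of_ne_zero (NeZero.ne k)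
  omega

set_option synthInstance.maxHeartbeats 1000000 in
/-- Proposition 3.17 (combinatorial content): the full log Floer differential
`∂(q, p) = (0, D p)` satisfies `range ∂ ≤ ker ∂`, and the cohomology
`ker ∂ / range ∂` has dimension `k + 2` over `ℤ/2`. -/
theorem log_floer_cohomology_single_lagrangian
    (k : ℕ) (hk : 0 < k) (hke : Even k)
    (D : (ZMod k → ZMod 2) →ₗ[ZMod 2] (ZMod k → ZMod 2))
    (hD : ∀ x : ZMod k → ZMod 2, ∀ j : ZMod k,
      D x j = if Even j.val then x (j - 1) + x (j + 1) else 0)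
    (bnd : ((ZMod k → ZMod 2) × (ZMod k → ZMod 2)) →ₗ[ZMod 2]
      ((ZMod k → ZMod 2) × (ZMod k → ZMod 2)))
    (hbnd : ∀ qp : (ZMod k → ZMod 2) × (ZMod k → ZMod 2), bnd qp = (0, D qp.2)) :
    LinearMap.range bnd ≤ LinearMap.ker bnd ∧
      Module.finrank (ZMod 2)
        ((LinearMap.ker bnd) ⧸
          (LinearMap.range bnd).comap (LinearMap.ker bnd).subtype) = k + 2 := by
  haveI : NeZero k := ⟨hk.ne'⟩
  have hDD : ∀ p : ZMod k → ZMod 2, D (D p) = 0 := by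
    intro p
    funext j
    rw [hD, Pi.zero_apply]
    by_cases hj : Even j.val
    · rw [if_pos hj, hD, hD, if_neg (lfc_pred_par k hke j hj),
        if_neg (by rw [lfc_succ_par k hke]; exact fun h => h hj)]
      rfl
    · rw [if_neg hj]
  have hle : LinearMap.range bnd ≤ LinearMap.ker bnd := by
    rintro y ⟨x, rfl⟩
    rw [LinearMap.mem_ker, hbnd, hbnd]
    simp [hDD]
  refine ⟨hle, ?_⟩
  let eker : (LinearMap.ker bnd) ≃ₗ[ZMod 2]
      (ZMod k → ZMod 2) × (LinearMap.ker D) :=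
    { toFun := fun x => (x.1.1, ⟨x.1.2, by
        have h := LinearMap.mem_ker.mp x.2
        rw [hbnd] at h
        exact LinearMap.mem_ker.mpr (congrArg Prod.snd h)⟩)
      map_add' := fun x y => rfl
      map_smul' := fun c x => rfl
      invFun := fun x => ⟨(x.1, x.2.1), by
        rw [LinearMap.mem_ker, hbnd]
        simp [LinearMap.mem_ker.mp x.2.2]⟩
      left_inv := fun x => rfl
      right_inv := fun x => rfl }
  let erng : (LinearMap.range bnd) ≃ₗ[ZMod 2] (LinearMap.range D) :=
    { toFun := fun y => ⟨y.1.2, by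
        obtain ⟨x, hx⟩ := y.2
        exact ⟨x.2, by rw [← hx, hbnd]⟩⟩
      map_add' := fun x y => rfl
      map_smul' := fun c x => rfl
      invFun := fun y => ⟨(0, y.1), by
        obtain ⟨p, hp⟩ := y.2
        exact ⟨(0, p), by rw [hbnd]; simp [hp]⟩⟩
      left_inv := by
        rintro ⟨y, hy⟩
        obtain ⟨x, rfl⟩ := hy
        simp only [Subtype.mk.injEq]
        exact Subtype.ext (by show ((0 : ZMod k → ZMod 2), (bnd x).2) = bnd x; rw [hbnd])
      right_inv := fun y => rfl }
  have hker : Module.finrank (ZMod 2) (LinearMap.ker bnd) = k + (k / 2 + 1) := by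
    rw [eker.finrank_eq, Module.finrank_prod, Module.finrank_fintype_fun_eq_card,
      ZMod.card, lfc_finrank_kerD k hke D hD]
  have hrng : Module.finrank (ZMod 2) (LinearMap.range bnd) = k / 2 - 1 := by
    rw [erng.finrank_eq, lfc_finrank_rangeD k hke D hD]
  have hcomap : Module.finrank (ZMod 2)
      ((LinearMap.range bnd).comap (LinearMap.ker bnd).subtype) = k / 2 - 1 := by
    rw [(Submodule.comapSubtypeEquivOfLe hle).finrank_eq, hrng]
  have hq := Submodule.finrank_quotient_add_finrank
    ((LinearMap.range bnd).comap (LinearMap.ker bnd).subtype)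
  rw [hcomap, hker] at hq
  obtain ⟨m, hm⟩ := hke
  omega
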